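/- In the Clifford Hayden–Preskill recovery protocol with generalized Bell measurement and Pauli feedback, when measurement outcome |EPR⟩_{D\overline{D}} occurs (probability N_{I_D}/d_A^2), the normalized post-measurement state on R\overline{R} is ρ_{R\overline{R}} = (1/N_{I_D}) ∑_{P_R : Λ_D(P_R)=I_D} |P_R⟩⟨P_R|, where |P_R⟩ = (P_R ⊗ I)|EPR⟩_{R\overline{R}}. In particular, if N_{I_D} = 1 the output is exactly |EPR⟩_{R\overline{R}}. -/

import Mathlib

open Matrix Kronecker BigOperators

/-- The `n`-qubit Pauli operator `X^x Z^z` (symplectic representation). -/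
noncomputable def pauli {n : ℕ} (x z : Fin n → ZMod 2) :
    Matrix (Fin n → ZMod 2) (Fin n → ZMod 2) ℂ :=
  fun j k => if j = k + x then ((-1 : ℂ)) ^ (∑ i, (z i * k i).val) else 0

/-- The Yoshida–Kitaev doubled Hayden–Preskill state, registers
`(R,(C,D),(D̄,C̄),R̄)`. -/
noncomputable def psiYK (nA nB nC nD : ℕ)
    (U : Matrix ((Fin nC → ZMod 2) × (Fin nD → ZMod 2))
      ((Fin nA → ZMod 2) × (Fin nB → ZMod 2)) ℂ)
    (r : Fin nA → ZMod 2) (cd : (Fin nC → ZMod 2) × (Fin nD → ZMod 2))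
    (dc : (Fin nD → ZMod 2) × (Fin nC → ZMod 2)) (rb : Fin nA → ZMod 2) : ℂ :=
  ((2 ^ nA : ℂ) * (Real.sqrt (2 ^ nB) : ℂ))⁻¹ *
    ∑ b : Fin nB → ZMod 2,
      U cd (r, b) * (starRingEnd ℂ) (U (dc.2, dc.1) (rb, b))

/-- Unnormalized state after projecting `DD̄` onto `|EPR⟩_{DD̄}`. -/
noncomputable def phiEPR (nA nB nC nD : ℕ)
    (U : Matrix ((Fin nC → ZMod 2) × (Fin nD → ZMod 2))
      ((Fin nA → ZMod 2) × (Fin nB → ZMod 2)) ℂ)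
    (r : Fin nA → ZMod 2) (cc cb : Fin nC → ZMod 2) (rb : Fin nA → ZMod 2) : ℂ :=
  ∑ d : Fin nD → ZMod 2,
    ((Real.sqrt (2 ^ nD) : ℂ))⁻¹ * psiYK nA nB nC nD U r (cc, d) (d, cb) rb


noncomputable def chi {n : ℕ} (w k : Fin n → ZMod 2) : ℂ :=
  ((-1 : ℂ)) ^ (∑ i, (w i * k i).val)

lemma pauli_apply {n : ℕ} (x z j k : Fin n → ZMod 2) :
    pauli x z j k = if j = k + x then chi z k else 0 := rfl

lemma eps_add (a b : ZMod 2) :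
    ((-1:ℂ)) ^ ((a + b).val) = (-1) ^ a.val * (-1) ^ b.val := by
  have h2 : ((1+1:ZMod 2)).val = 0 := rfl
  have h1 : ((1:ZMod 2)).val = 1 := rfl
  have h0 : ((0:ZMod 2)).val = 0 := rfl
  have ha := ZMod.val_lt a
  have hb := ZMod.val_lt b
  rw [ZMod.val_add, ← pow_add]
  interval_cases a.val <;> interval_cases b.val <;> norm_num

lemma chi_prod {n : ℕ} (w k : Fin n → ZMod 2) :
    chi w k = ∏ i, ((-1:ℂ)) ^ ((w i * k i).val) := by
  rw [chi, Finset.prod_pow_eq_pow_sum]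

lemma chi_comm {n : ℕ} (w k : Fin n → ZMod 2) : chi w k = chi k w := by
  unfold chi; congr 1; exact Finset.sum_congr rfl fun i _ => by rw [mul_comm]

lemma chi_add_right {n : ℕ} (w k k' : Fin n → ZMod 2) :
    chi w (k + k') = chi w k * chi w k' := by
  rw [chi_prod, chi_prod, chi_prod, ← Finset.prod_mul_distrib]
  refine Finset.prod_congr rfl fun i _ => ?_
  have : w i * (k + k') i = w i * k i + w i * k' i := by
    simp [Pi.add_apply, mul_add]
  rw [this, eps_add]

lemma chi_zero_right {n : ℕ} (w : Fin n → ZMod 2) : chi w 0 = 1 := by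
  simp [chi]

lemma chi_zero_left {n : ℕ} (k : Fin n → ZMod 2) : chi 0 k = 1 := by
  simp [chi]

lemma chi_mul_self {n : ℕ} (w k : Fin n → ZMod 2) : chi w k * chi w k = 1 := by
  rw [chi, ← pow_add, ← two_mul, pow_mul]; norm_num

lemma conj_chi {n : ℕ} (w k : Fin n → ZMod 2) :
    (starRingEnd ℂ) (chi w k) = chi w k := by
  rw [chi, map_pow]; norm_num

lemma sum_chi {n : ℕ} (w : Fin n → ZMod 2) :
    ∑ k : Fin n → ZMod 2, chi w k = if w = 0 then ((2:ℂ) ^ n) else 0 := by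
  by_cases hw : w = 0
  · simp [hw, chi_zero_left, Finset.card_univ]
  · simp only [hw, if_false]
    obtain ⟨i0, hi0⟩ : ∃ i, w i ≠ 0 := by
      by_contra h; push_neg at h; exact hw (funext h)
    set k0 : Fin n → ZMod 2 := fun i => if i = i0 then 1 else 0 with hk0
    have hmem : chi w k0 = -1 := by
      rw [chi_prod]
      rw [Finset.prod_eq_single i0 (fun b _ hb => by simp [hk0, hb])
        (fun h => absurd (Finset.mem_univ i0) h)]
      have h1 : w i0 = 1 := by
        have : ∀ a : ZMod 2, a ≠ 0 → a = 1 := by decide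
        exact this _ hi0
      have : ((1:ZMod 2)).val = 1 := rfl
      simp [hk0, h1, this]
    have h2 : ∑ k : Fin n → ZMod 2, chi w (k + k0) = ∑ k : Fin n → ZMod 2, chi w k :=
      Fintype.sum_equiv (Equiv.addRight k0) _ _ (fun k => rfl)
    have h3 : ∑ k : Fin n → ZMod 2, chi w k
        = -(∑ k : Fin n → ZMod 2, chi w k) := by
      conv_lhs => rw [← h2]
      simp only [chi_add_right, hmem, mul_neg, mul_one]
      rw [← Finset.sum_neg_distrib]
    have := congrArg (fun t => t + (∑ k : Fin n → ZMod 2, chi w k)) h3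
    simp only [neg_add_cancel] at this
    have h4 : (2:ℂ) * (∑ k : Fin n → ZMod 2, chi w k) = 0 := by ring_nf; linear_combination this
    exact (mul_eq_zero.mp h4).resolve_left two_ne_zero

lemma ite_zero_mul_ite_zero' {P Q : Prop} [Decidable P] [Decidable Q] (a b : ℂ) :
    (if P then a else 0) * (if Q then b else 0) = if P ∧ Q then a * b else 0 := by
  by_cases hP : P <;> by_cases hQ : Q <;> simp [hP, hQ]

lemma zmod_add_eq_zero_iff {n : ℕ} (a b : Fin n → ZMod 2) : a + b = 0 ↔ b = a := by
  have h : ∀ u v : ZMod 2, (u + v = 0 ↔ v = u) := by decide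
  constructor
  · intro hh; funext i; exact (h _ _).mp (congrFun hh i)
  · intro hh; funext i; exact (h _ _).mpr (congrFun hh i)

lemma zmod_eq_add_iff {n : ℕ} (a b x : Fin n → ZMod 2) : a = b + x ↔ x = a + b := by
  have h : ∀ u v w : ZMod 2, (u = v + w ↔ w = u + v) := by decide
  constructor
  · intro hh; funext i; exact (h _ _ _).mp (congrFun hh i)
  · intro hh; funext i; exact (h _ _ _).mpr (congrFun hh i)

lemma zmod_add_add_self {n : ℕ} (a b : Fin n → ZMod 2) : b + (a + b) = a := by
  have h : ∀ u v : ZMod 2, v + (u + v) = u := by decide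
  funext i; exact h _ _

lemma conj_pauli {n : ℕ} (x z j k : Fin n → ZMod 2) :
    (starRingEnd ℂ) (pauli x z j k) = pauli x z j k := by
  simp [pauli_apply, apply_ite (starRingEnd ℂ), conj_chi]

lemma pauli_orth {n : ℕ} (x z x' z' : Fin n → ZMod 2) :
    ∑ j : Fin n → ZMod 2, ∑ k : Fin n → ZMod 2,
      pauli x z j k * (starRingEnd ℂ) (pauli x' z' j k)
    = if x = x' ∧ z = z' then ((2:ℂ) ^ n) else 0 := by
  simp only [conj_pauli]
  simp only [pauli_apply, ite_zero_mul_ite_zero']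
  rw [Finset.sum_comm]
  have hinner : ∀ k : Fin n → ZMod 2,
      (∑ j : Fin n → ZMod 2, if j = k + x ∧ j = k + x' then chi z k * chi z' k else 0)
        = if x = x' then chi z k * chi z' k else 0 := by
    intro k
    rw [Finset.sum_eq_single (k + x) (fun b _ hb => by
        simp only [ite_eq_right_iff]; rintro ⟨h1, -⟩; exact absurd h1 hb)
      (fun h => absurd (Finset.mem_univ _) h)]
    by_cases hxx : x = x'
    · simp [hxx]
    · have : ¬(k + x = k + x') := fun h => hxx (by
        have := add_left_cancel h; exact this)
      simp [this, hxx]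
  rw [Finset.sum_congr rfl (fun k _ => hinner k)]
  by_cases hxx : x = x'
  · simp only [hxx, if_true, true_and]
    have hcc : ∀ k : Fin n → ZMod 2, chi z k * chi z' k = chi (z + z') k := by
      intro k; rw [chi_comm z, chi_comm z', chi_comm (z + z'), chi_add_right]
    simp only [hcc]
    rw [sum_chi]
    by_cases hzz : z = z'
    · simp [hzz, zmod_add_eq_zero_iff]
    · have : ¬(z + z' = 0) := fun h => hzz ((zmod_add_eq_zero_iff _ _).mp h).symm
      simp [this, hzz]
  · simp [hxx]

lemma pauli_complete {n : ℕ} (r rb j k : Fin n → ZMod 2) :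
    ∑ x : Fin n → ZMod 2, ∑ z : Fin n → ZMod 2, pauli x z r rb * pauli x z j k
      = (if j = r then 1 else 0) * (if k = rb then 1 else 0) * ((2:ℂ) ^ n) := by
  have hinner : ∀ x : Fin n → ZMod 2,
      (∑ z : Fin n → ZMod 2, pauli x z r rb * pauli x z j k)
      = if (r = rb + x ∧ j = k + x) then (if k = rb then ((2:ℂ)^n) else 0) else 0 := by
    intro x
    simp only [pauli_apply, ite_zero_mul_ite_zero']
    by_cases hpq : (r = rb + x ∧ j = k + x)
    · have hcond : (r = rb + x ∧ j = k + x) = True := by simp [hpq.1, hpq.2]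
      have : ∀ zz : Fin n → ZMod 2, chi zz rb * chi zz k = chi (rb + k) zz := by
        intro zz; rw [chi_comm (rb + k), chi_add_right, chi_comm zz rb, chi_comm zz k]
      simp only [hcond, if_true, this]
      rw [sum_chi]
      by_cases hk : k = rb
      · simp [hk, zmod_add_eq_zero_iff]
      · have : ¬(rb + k = 0) := fun h => hk ((zmod_add_eq_zero_iff _ _).mp h)
        simp [this, hk]
    · simp [hpq]
  simp only [hinner]
  simp only [zmod_eq_add_iff r rb]
  rw [Finset.sum_eq_single (r + rb) (fun b _ hb => by
      simp only [ite_eq_right_iff]; rintro ⟨h1, -⟩; exact absurd h1 hb)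
    (fun h => absurd (Finset.mem_univ _) h)]
  by_cases hk : k = rb
  · subst hk
    have hjr : (k + (r + k)) = r := zmod_add_add_self r k
    by_cases hj : j = r
    · simp [hj, hjr]
    · have : ¬(j = k + (r + k)) := by rw [hjr]; exact hj
      simp [this, hj]
  · simp [hk]

lemma trace_pauli {n : ℕ} (x z : Fin n → ZMod 2) :
    Matrix.trace (pauli x z) = if x = 0 ∧ z = 0 then ((2:ℂ) ^ n) else 0 := by
  unfold Matrix.trace
  simp only [Matrix.diag, pauli_apply]
  by_cases hx : x = 0
  · subst hx
    simp only [add_zero, if_pos rfl, true_and]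
    simp only [if_true]
    rw [sum_chi]
  · have hne : ∀ d : Fin n → ZMod 2, ¬(d = d + x) := by
      intro d h
      apply hx
      have h2 := (zmod_eq_add_iff d d x).mp h
      have hdd : d + d = 0 := by
        have hu : ∀ u : ZMod 2, u + u = 0 := by decide
        funext i; exact hu _
      rw [hdd] at h2; exact h2
    simp [hne, hx]

lemma pauli_zero_zero {n : ℕ} : pauli (0 : Fin n → ZMod 2) 0 = 1 := by
  ext j k
  simp [pauli_apply, chi, Matrix.one_apply]

lemma kron_conjT {m n p q : Type*} (A : Matrix m n ℂ) (B : Matrix p q ℂ) :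
    (A ⊗ₖ B)ᴴ = Aᴴ ⊗ₖ Bᴴ := by
  ext ⟨i, j⟩ ⟨k, l⟩
  simp [conjTranspose_apply, kroneckerMap_apply]

lemma trace_mul_conjT {m n : Type*} [Fintype m] [Fintype n] (A B : Matrix m n ℂ) :
    Matrix.trace (A * Bᴴ) = ∑ j : m, ∑ k : n, A j k * (starRingEnd ℂ) (B j k) := by
  simp [Matrix.trace, Matrix.mul_apply, Matrix.diag, conjTranspose_apply]

lemma rot3 {α β γ : Type*} [Fintype α] [Fintype β] [Fintype γ] (g : α → β → γ → ℂ) :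
    ∑ x : α, ∑ y : β, ∑ z : γ, g x y z = ∑ z : γ, ∑ x : α, ∑ y : β, g x y z := by
  calc ∑ x : α, ∑ y : β, ∑ z : γ, g x y z
      = ∑ x : α, ∑ z : γ, ∑ y : β, g x y z :=
        Finset.sum_congr rfl fun x _ => Finset.sum_comm
    _ = ∑ z : γ, ∑ x : α, ∑ y : β, g x y z := Finset.sum_comm

lemma entry_UAU {α β : Type*} [Fintype α] [Fintype β]
    (U : Matrix α β ℂ) (A : Matrix β β ℂ) (p q : α) :
    (U * A * Uᴴ) p q = ∑ w : β, ∑ y : β, U p w * A w y * (starRingEnd ℂ) (U q y) := by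
  rw [Matrix.mul_apply]
  simp only [Matrix.mul_apply, Matrix.conjTranspose_apply, Finset.sum_mul]
  rw [Finset.sum_comm]; rfl

lemma hM_lemma {nA nB nC nD : ℕ}
    (U : Matrix ((Fin nC → ZMod 2) × (Fin nD → ZMod 2))
      ((Fin nA → ZMod 2) × (Fin nB → ZMod 2)) ℂ)
    (P : Matrix (Fin nA → ZMod 2) (Fin nA → ZMod 2) ℂ)
    (cc cb : Fin nC → ZMod 2) (d d' : Fin nD → ZMod 2) :
    (U * (P ⊗ₖ (1 : Matrix (Fin nB → ZMod 2) (Fin nB → ZMod 2) ℂ)) * Uᴴ) (cc, d) (cb, d')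
    = ∑ b : Fin nB → ZMod 2, ∑ j : Fin nA → ZMod 2, ∑ k : Fin nA → ZMod 2,
        P j k * (U (cc, d) (j, b) * (starRingEnd ℂ) (U (cb, d') (k, b))) := by
  rw [entry_UAU]
  simp only [Fintype.sum_prod_type]
  rw [Finset.sum_comm]
  refine Finset.sum_congr rfl fun b _ => ?_
  refine Finset.sum_congr rfl fun j _ => ?_
  refine Finset.sum_congr rfl fun k _ => ?_
  simp only [Matrix.kroneckerMap_apply, Matrix.one_apply, mul_ite, mul_one, mul_zero,
    ite_mul, zero_mul, starRingEnd_apply]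
  rw [Finset.sum_ite_eq, if_pos (Finset.mem_univ b)]
  ring

lemma sum_swap4 {α β γ δ : Type*} [Fintype α] [Fintype β] [Fintype γ] [Fintype δ]
    (f : α → β → γ → δ → ℂ) :
    ∑ a : α, ∑ b : β, ∑ x : γ, ∑ y : δ, f a b x y
      = ∑ x : γ, ∑ y : δ, ∑ a : α, ∑ b : β, f a b x y := by
  have h1 : ∀ a : α, ∑ b : β, ∑ x : γ, ∑ y : δ, f a b x y
      = ∑ x : γ, ∑ y : δ, ∑ b : β, f a b x y := fun a => (rot3 _).trans (rot3 _)
  simp only [h1]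
  exact (rot3 _).trans (rot3 _)


section main
variable {nA nB nC nD : ℕ}
  (U : Matrix ((Fin nC → ZMod 2) × (Fin nD → ZMod 2))
      ((Fin nA → ZMod 2) × (Fin nB → ZMod 2)) ℂ)
  (c : (Fin nA → ZMod 2) → (Fin nA → ZMod 2) → ℂ)
  (xc zc : (Fin nA → ZMod 2) → (Fin nA → ZMod 2) → (Fin nC → ZMod 2))
  (xd zd : (Fin nA → ZMod 2) → (Fin nA → ZMod 2) → (Fin nD → ZMod 2))

lemma sumDD
    (hClif : ∀ x z : Fin nA → ZMod 2,
      U * (pauli x z ⊗ₖ (1 : Matrix (Fin nB → ZMod 2) (Fin nB → ZMod 2) ℂ)) * Uᴴ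
        = c x z • (pauli (xc x z) (zc x z) ⊗ₖ pauli (xd x z) (zd x z)))
    (x z : Fin nA → ZMod 2) (cc cb : Fin nC → ZMod 2) :
    ∑ d : Fin nD → ZMod 2, ∑ b : Fin nB → ZMod 2, ∑ j : Fin nA → ZMod 2,
        ∑ k : Fin nA → ZMod 2,
        pauli x z j k * (U (cc, d) (j, b) * (starRingEnd ℂ) (U (cb, d) (k, b)))
    = c x z * pauli (xc x z) (zc x z) cc cb *
        (if xd x z = 0 ∧ zd x z = 0 then ((2:ℂ) ^ nD) else 0) := by
  have h1 : ∀ d : Fin nD → ZMod 2,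
      (∑ b : Fin nB → ZMod 2, ∑ j : Fin nA → ZMod 2, ∑ k : Fin nA → ZMod 2,
        pauli x z j k * (U (cc, d) (j, b) * (starRingEnd ℂ) (U (cb, d) (k, b))))
      = c x z * (pauli (xc x z) (zc x z) cc cb * pauli (xd x z) (zd x z) d d) := by
    intro d
    rw [← hM_lemma, hClif x z]
    simp [Matrix.smul_apply, Matrix.kroneckerMap_apply, smul_eq_mul]
  simp only [h1, ← Finset.mul_sum]
  have h2 : (∑ d : Fin nD → ZMod 2, pauli (xd x z) (zd x z) d d)
      = if xd x z = 0 ∧ zd x z = 0 then ((2:ℂ) ^ nD) else 0 := trace_pauli _ _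
  rw [h2, mul_assoc]

lemma delta_expand (r rb : Fin nA → ZMod 2) (cc cb : Fin nC → ZMod 2)
    (d : Fin nD → ZMod 2) (b : Fin nB → ZMod 2) :
    ((2:ℂ) ^ nA) * (U (cc, d) (r, b) * (starRingEnd ℂ) (U (cb, d) (rb, b)))
    = ∑ x : Fin nA → ZMod 2, ∑ z : Fin nA → ZMod 2, pauli x z r rb *
        (∑ j : Fin nA → ZMod 2, ∑ k : Fin nA → ZMod 2,
          pauli x z j k * (U (cc, d) (j, b) * (starRingEnd ℂ) (U (cb, d) (k, b)))) := by
  have swap : ∑ x : Fin nA → ZMod 2, ∑ z : Fin nA → ZMod 2, pauli x z r rb *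
        (∑ j : Fin nA → ZMod 2, ∑ k : Fin nA → ZMod 2,
          pauli x z j k * (U (cc, d) (j, b) * (starRingEnd ℂ) (U (cb, d) (k, b))))
      = ∑ j : Fin nA → ZMod 2, ∑ k : Fin nA → ZMod 2,
          (∑ x : Fin nA → ZMod 2, ∑ z : Fin nA → ZMod 2, pauli x z r rb * pauli x z j k)
            * (U (cc, d) (j, b) * (starRingEnd ℂ) (U (cb, d) (k, b))) := by
    simp only [Finset.mul_sum, Finset.sum_mul]
    rw [rot3]
    refine Finset.sum_congr rfl fun j _ => ?_
    rw [rot3]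
    refine Finset.sum_congr rfl fun k _ => ?_
    refine Finset.sum_congr rfl fun x _ => ?_
    refine Finset.sum_congr rfl fun z _ => ?_
    ring
  rw [swap]
  simp only [pauli_complete, ite_mul, one_mul, zero_mul]
  rw [Finset.sum_eq_single r (fun b' _ hb => by simp [hb])
    (fun h => absurd (Finset.mem_univ _) h)]
  rw [Finset.sum_eq_single rb (fun b' _ hb => by simp [hb])
    (fun h => absurd (Finset.mem_univ _) h)]
  simp only [if_true]

lemma phi_formula
    (hClif : ∀ x z : Fin nA → ZMod 2,
      U * (pauli x z ⊗ₖ (1 : Matrix (Fin nB → ZMod 2) (Fin nB → ZMod 2) ℂ)) * Uᴴ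
        = c x z • (pauli (xc x z) (zc x z) ⊗ₖ pauli (xd x z) (zd x z)))
    (r : Fin nA → ZMod 2) (cc cb : Fin nC → ZMod 2) (rb : Fin nA → ZMod 2) :
    phiEPR nA nB nC nD U r cc cb rb
      = (((2:ℂ) ^ nA) ^ 2 * (Real.sqrt (2 ^ nB) : ℂ) * (Real.sqrt (2 ^ nD) : ℂ))⁻¹ *
        ∑ x : Fin nA → ZMod 2, ∑ z : Fin nA → ZMod 2,
          pauli x z r rb * (c x z * pauli (xc x z) (zc x z) cc cb *
            (if xd x z = 0 ∧ zd x z = 0 then ((2:ℂ) ^ nD) else 0)) := by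
  have hsB : ((Real.sqrt (2 ^ nB) : ℝ) : ℂ) ≠ 0 :=
    Complex.ofReal_ne_zero.mpr (Real.sqrt_pos.mpr (by positivity)).ne'
  have hsD : ((Real.sqrt (2 ^ nD) : ℝ) : ℂ) ≠ 0 :=
    Complex.ofReal_ne_zero.mpr (Real.sqrt_pos.mpr (by positivity)).ne'
  have h2A : ((2:ℂ) ^ nA) ≠ 0 := pow_ne_zero _ two_ne_zero
  have e1 : phiEPR nA nB nC nD U r cc cb rb
      = ((Real.sqrt (2 ^ nD) : ℂ))⁻¹ * (((2 ^ nA : ℂ) * (Real.sqrt (2 ^ nB) : ℂ))⁻¹ *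
          ∑ d : Fin nD → ZMod 2, ∑ b : Fin nB → ZMod 2,
            U (cc, d) (r, b) * (starRingEnd ℂ) (U (cb, d) (rb, b))) := by
    unfold phiEPR psiYK
    simp only [Finset.mul_sum]
  have key : ((2:ℂ) ^ nA) *
      (∑ d : Fin nD → ZMod 2, ∑ b : Fin nB → ZMod 2,
        U (cc, d) (r, b) * (starRingEnd ℂ) (U (cb, d) (rb, b)))
      = ∑ x : Fin nA → ZMod 2, ∑ z : Fin nA → ZMod 2,
          pauli x z r rb * (c x z * pauli (xc x z) (zc x z) cc cb *
            (if xd x z = 0 ∧ zd x z = 0 then ((2:ℂ) ^ nD) else 0)) := by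
    calc ((2:ℂ) ^ nA) * (∑ d : Fin nD → ZMod 2, ∑ b : Fin nB → ZMod 2,
          U (cc, d) (r, b) * (starRingEnd ℂ) (U (cb, d) (rb, b)))
        = ∑ d : Fin nD → ZMod 2, ∑ b : Fin nB → ZMod 2, ((2:ℂ) ^ nA) *
            (U (cc, d) (r, b) * (starRingEnd ℂ) (U (cb, d) (rb, b))) := by
          simp only [Finset.mul_sum]
      _ = ∑ d : Fin nD → ZMod 2, ∑ b : Fin nB → ZMod 2,
            ∑ x : Fin nA → ZMod 2, ∑ z : Fin nA → ZMod 2, pauli x z r rb *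
              (∑ j : Fin nA → ZMod 2, ∑ k : Fin nA → ZMod 2,
                pauli x z j k * (U (cc, d) (j, b) * (starRingEnd ℂ) (U (cb, d) (k, b)))) :=
          Finset.sum_congr rfl fun d _ => Finset.sum_congr rfl fun b _ =>
            delta_expand U r rb cc cb d b
      _ = ∑ x : Fin nA → ZMod 2, ∑ z : Fin nA → ZMod 2,
            ∑ d : Fin nD → ZMod 2, ∑ b : Fin nB → ZMod 2, pauli x z r rb *
              (∑ j : Fin nA → ZMod 2, ∑ k : Fin nA → ZMod 2,
                pauli x z j k * (U (cc, d) (j, b) * (starRingEnd ℂ) (U (cb, d) (k, b)))) :=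
          sum_swap4 _
      _ = ∑ x : Fin nA → ZMod 2, ∑ z : Fin nA → ZMod 2, pauli x z r rb *
            (∑ d : Fin nD → ZMod 2, ∑ b : Fin nB → ZMod 2,
              ∑ j : Fin nA → ZMod 2, ∑ k : Fin nA → ZMod 2,
                pauli x z j k * (U (cc, d) (j, b) * (starRingEnd ℂ) (U (cb, d) (k, b)))) := by
          simp only [Finset.mul_sum]
      _ = ∑ x : Fin nA → ZMod 2, ∑ z : Fin nA → ZMod 2,
            pauli x z r rb * (c x z * pauli (xc x z) (zc x z) cc cb *
              (if xd x z = 0 ∧ zd x z = 0 then ((2:ℂ) ^ nD) else 0)) :=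
          Finset.sum_congr rfl fun x _ => Finset.sum_congr rfl fun z _ => by
            rw [sumDD U c xc zc xd zd hClif x z cc cb]
  rw [e1, ← key]
  field_simp

lemma card_fun2 (m : ℕ) : (Fintype.card (Fin m → ZMod 2) : ℂ) = (2:ℂ) ^ m := by
  rw [Fintype.card_fun]
  simp

lemma cross (hU2 : Uᴴ * U = 1)
    (hClif : ∀ x z : Fin nA → ZMod 2,
      U * (pauli x z ⊗ₖ (1 : Matrix (Fin nB → ZMod 2) (Fin nB → ZMod 2) ℂ)) * Uᴴ
        = c x z • (pauli (xc x z) (zc x z) ⊗ₖ pauli (xd x z) (zd x z)))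
    (x z x' z' : Fin nA → ZMod 2)
    (h1 : xd x z = 0) (h2 : zd x z = 0) (h1' : xd x' z' = 0) (h2' : zd x' z' = 0) :
    c x z * (starRingEnd ℂ) (c x' z') *
      (∑ cc : Fin nC → ZMod 2, ∑ cb : Fin nC → ZMod 2,
        pauli (xc x z) (zc x z) cc cb *
          (starRingEnd ℂ) (pauli (xc x' z') (zc x' z') cc cb)) * ((2:ℂ) ^ nD)
    = (2:ℂ) ^ nB * (if x = x' ∧ z = z' then ((2:ℂ) ^ nA) else 0) := by
  have hM := hClif x z
  have hM' := hClif x' z'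
  rw [h1, h2, pauli_zero_zero] at hM
  rw [h1', h2', pauli_zero_zero] at hM'
  have lhs_eq : Matrix.trace ((U * (pauli x z ⊗ₖ (1 : Matrix (Fin nB → ZMod 2)
        (Fin nB → ZMod 2) ℂ)) * Uᴴ) *
        (U * (pauli x' z' ⊗ₖ (1 : Matrix (Fin nB → ZMod 2) (Fin nB → ZMod 2) ℂ)) * Uᴴ)ᴴ)
      = c x z * (starRingEnd ℂ) (c x' z') *
        (∑ cc : Fin nC → ZMod 2, ∑ cb : Fin nC → ZMod 2,
          pauli (xc x z) (zc x z) cc cb *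
            (starRingEnd ℂ) (pauli (xc x' z') (zc x' z') cc cb)) * ((2:ℂ) ^ nD) := by
    rw [hM, hM', Matrix.conjTranspose_smul, kron_conjT, Matrix.conjTranspose_one,
      Matrix.smul_mul, Matrix.mul_smul, ← Matrix.mul_kronecker_mul, mul_one,
      Matrix.trace_smul, Matrix.trace_smul, Matrix.trace_kronecker, Matrix.trace_one,
      trace_mul_conjT]
    rw [card_fun2]
    simp only [smul_eq_mul, starRingEnd_apply]
    ring
  have hprod : (U * (pauli x z ⊗ₖ (1 : Matrix (Fin nB → ZMod 2) (Fin nB → ZMod 2) ℂ)) * Uᴴ) *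
        (U * (pauli x' z' ⊗ₖ (1 : Matrix (Fin nB → ZMod 2) (Fin nB → ZMod 2) ℂ)) * Uᴴ)ᴴ
      = U * ((pauli x z ⊗ₖ (1 : Matrix (Fin nB → ZMod 2) (Fin nB → ZMod 2) ℂ)) *
          (pauli x' z' ⊗ₖ (1 : Matrix (Fin nB → ZMod 2) (Fin nB → ZMod 2) ℂ))ᴴ) * Uᴴ := by
    rw [Matrix.conjTranspose_mul, Matrix.conjTranspose_mul, Matrix.conjTranspose_conjTranspose]
    calc (U * (pauli x z ⊗ₖ (1 : Matrix (Fin nB → ZMod 2) (Fin nB → ZMod 2) ℂ)) * Uᴴ) *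
          (U * ((pauli x' z' ⊗ₖ (1 : Matrix (Fin nB → ZMod 2) (Fin nB → ZMod 2) ℂ))ᴴ * Uᴴ))
        = U * ((pauli x z ⊗ₖ (1 : Matrix (Fin nB → ZMod 2) (Fin nB → ZMod 2) ℂ)) *
            ((Uᴴ * U) * ((pauli x' z' ⊗ₖ (1 : Matrix (Fin nB → ZMod 2) (Fin nB → ZMod 2) ℂ))ᴴ * Uᴴ))) := by
          simp only [Matrix.mul_assoc]
      _ = U * ((pauli x z ⊗ₖ (1 : Matrix (Fin nB → ZMod 2) (Fin nB → ZMod 2) ℂ)) *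
            (pauli x' z' ⊗ₖ (1 : Matrix (Fin nB → ZMod 2) (Fin nB → ZMod 2) ℂ))ᴴ) * Uᴴ := by
          rw [hU2, Matrix.one_mul]
          simp only [Matrix.mul_assoc]
  have rhs_eq : Matrix.trace ((U * (pauli x z ⊗ₖ (1 : Matrix (Fin nB → ZMod 2)
        (Fin nB → ZMod 2) ℂ)) * Uᴴ) *
        (U * (pauli x' z' ⊗ₖ (1 : Matrix (Fin nB → ZMod 2) (Fin nB → ZMod 2) ℂ)) * Uᴴ)ᴴ)
      = (2:ℂ) ^ nB * (if x = x' ∧ z = z' then ((2:ℂ) ^ nA) else 0) := by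
    rw [hprod, Matrix.trace_mul_cycle, ← Matrix.mul_assoc, hU2, Matrix.one_mul]
    rw [kron_conjT, Matrix.conjTranspose_one, ← Matrix.mul_kronecker_mul, mul_one,
      Matrix.trace_kronecker, Matrix.trace_one, trace_mul_conjT, pauli_orth, card_fun2]
    by_cases h : x = x' ∧ z = z' <;> simp [h] <;> ring
  exact lhs_eq.symm.trans rhs_eq

lemma sum_cc_cb (hU2 : Uᴴ * U = 1)
    (hClif : ∀ x z : Fin nA → ZMod 2,
      U * (pauli x z ⊗ₖ (1 : Matrix (Fin nB → ZMod 2) (Fin nB → ZMod 2) ℂ)) * Uᴴ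
        = c x z • (pauli (xc x z) (zc x z) ⊗ₖ pauli (xd x z) (zd x z)))
    (r rb q1 q2 : Fin nA → ZMod 2) :
    ∑ cc : Fin nC → ZMod 2, ∑ cb : Fin nC → ZMod 2,
      phiEPR nA nB nC nD U r cc cb rb * (starRingEnd ℂ) (phiEPR nA nB nC nD U q1 cc cb q2)
    = (((2:ℂ) ^ nA) ^ 3)⁻¹ * ∑ x : Fin nA → ZMod 2, ∑ z : Fin nA → ZMod 2,
        (if xd x z = 0 ∧ zd x z = 0 then pauli x z r rb * pauli x z q1 q2 else 0) := by
  have hsB : ((Real.sqrt (2 ^ nB) : ℝ) : ℂ) ≠ 0 :=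
    Complex.ofReal_ne_zero.mpr (Real.sqrt_pos.mpr (by positivity)).ne'
  have hsD : ((Real.sqrt (2 ^ nD) : ℝ) : ℂ) ≠ 0 :=
    Complex.ofReal_ne_zero.mpr (Real.sqrt_pos.mpr (by positivity)).ne'
  have h2A : ((2:ℂ) ^ nA) ≠ 0 := pow_ne_zero _ two_ne_zero
  have hsB2 : ((Real.sqrt (2 ^ nB) : ℝ) : ℂ) * ((Real.sqrt (2 ^ nB) : ℝ) : ℂ) = (2:ℂ) ^ nB := by
    rw [← Complex.ofReal_mul, Real.mul_self_sqrt (by positivity)]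
    push_cast; ring
  have hsD2 : ((Real.sqrt (2 ^ nD) : ℝ) : ℂ) * ((Real.sqrt (2 ^ nD) : ℝ) : ℂ) = (2:ℂ) ^ nD := by
    rw [← Complex.ofReal_mul, Real.mul_self_sqrt (by positivity)]
    push_cast; ring
  have h2c : (starRingEnd ℂ) (2:ℂ) = 2 := by
    rw [show (2:ℂ) = ((2:ℝ):ℂ) from by norm_num]
    exact Complex.conj_ofReal _
  set K : ℂ := (((2:ℂ) ^ nA) ^ 2 * (Real.sqrt (2 ^ nB) : ℂ) * (Real.sqrt (2 ^ nD) : ℂ))⁻¹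
    with hKdef
  have hKconj : (starRingEnd ℂ) K = K := by
    rw [hKdef]
    simp [map_inv₀, Complex.conj_ofReal, h2c]
  have hφc : ∀ w1 w2 : Fin nA → ZMod 2, ∀ cc cb : Fin nC → ZMod 2,
      (starRingEnd ℂ) (phiEPR nA nB nC nD U w1 cc cb w2)
      = K * ∑ x : Fin nA → ZMod 2, ∑ z : Fin nA → ZMod 2,
          pauli x z w1 w2 * ((starRingEnd ℂ) (c x z) * pauli (xc x z) (zc x z) cc cb *
            (if xd x z = 0 ∧ zd x z = 0 then ((2:ℂ) ^ nD) else 0)) := by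
    intro w1 w2 cc cb
    rw [phi_formula U c xc zc xd zd hClif w1 cc cb w2, _root_.map_mul, hKconj, map_sum]
    congr 1
    refine Finset.sum_congr rfl fun x _ => ?_
    rw [map_sum]
    refine Finset.sum_congr rfl fun z _ => ?_
    rw [_root_.map_mul, _root_.map_mul, _root_.map_mul, conj_pauli, conj_pauli]
    congr 2
    split <;> simp [h2c]
  have hmulsum : ∀ (f g : (Fin nA → ZMod 2) → (Fin nA → ZMod 2) → ℂ),
      (∑ x : Fin nA → ZMod 2, ∑ z : Fin nA → ZMod 2, f x z) *
        (∑ x : Fin nA → ZMod 2, ∑ z : Fin nA → ZMod 2, g x z)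
      = ∑ x : Fin nA → ZMod 2, ∑ z : Fin nA → ZMod 2, ∑ x' : Fin nA → ZMod 2,
          ∑ z' : Fin nA → ZMod 2, f x z * g x' z' := by
    intro f g
    rw [Finset.sum_mul_sum]
    calc ∑ x : Fin nA → ZMod 2, ∑ x' : Fin nA → ZMod 2,
          (∑ z : Fin nA → ZMod 2, f x z) * (∑ z' : Fin nA → ZMod 2, g x' z')
        = ∑ x : Fin nA → ZMod 2, ∑ x' : Fin nA → ZMod 2, ∑ z : Fin nA → ZMod 2,
            ∑ z' : Fin nA → ZMod 2, f x z * g x' z' :=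
          Finset.sum_congr rfl fun x _ => Finset.sum_congr rfl fun x' _ =>
            Finset.sum_mul_sum _ _ _ _
      _ = ∑ x : Fin nA → ZMod 2, ∑ z : Fin nA → ZMod 2, ∑ x' : Fin nA → ZMod 2,
            ∑ z' : Fin nA → ZMod 2, f x z * g x' z' :=
          Finset.sum_congr rfl fun x _ => Finset.sum_comm
  -- the inner collapse
  have inner_collapse : ∀ x z : Fin nA → ZMod 2,
      (∑ x' : Fin nA → ZMod 2, ∑ z' : Fin nA → ZMod 2,
        (pauli x z r rb * pauli x' z' q1 q2) * ((c x z * (starRingEnd ℂ) (c x' z')) *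
          (∑ cc : Fin nC → ZMod 2, ∑ cb : Fin nC → ZMod 2,
            pauli (xc x z) (zc x z) cc cb *
              (starRingEnd ℂ) (pauli (xc x' z') (zc x' z') cc cb)) *
          ((if xd x z = 0 ∧ zd x z = 0 then ((2:ℂ) ^ nD) else 0) *
            (if xd x' z' = 0 ∧ zd x' z' = 0 then ((2:ℂ) ^ nD) else 0))))
      = if xd x z = 0 ∧ zd x z = 0 then
          (pauli x z r rb * pauli x z q1 q2) * ((2:ℂ) ^ nA * (2:ℂ) ^ nB * (2:ℂ) ^ nD)
        else 0 := by
    intro x z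
    by_cases hker : xd x z = 0 ∧ zd x z = 0
    · conv_rhs => rw [if_pos hker]
      have hstep : ∀ x' z' : Fin nA → ZMod 2,
          (pauli x z r rb * pauli x' z' q1 q2) * ((c x z * (starRingEnd ℂ) (c x' z')) *
            (∑ cc : Fin nC → ZMod 2, ∑ cb : Fin nC → ZMod 2,
              pauli (xc x z) (zc x z) cc cb *
                (starRingEnd ℂ) (pauli (xc x' z') (zc x' z') cc cb)) *
            ((if xd x z = 0 ∧ zd x z = 0 then ((2:ℂ) ^ nD) else 0) *
              (if xd x' z' = 0 ∧ zd x' z' = 0 then ((2:ℂ) ^ nD) else 0)))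
          = if x = x' ∧ z = z' then
              (pauli x z r rb * pauli x' z' q1 q2) * ((2:ℂ) ^ nA * (2:ℂ) ^ nB * (2:ℂ) ^ nD)
            else 0 := by
        intro x' z'
        by_cases hker' : xd x' z' = 0 ∧ zd x' z' = 0
        · rw [if_pos hker, if_pos hker']
          have hc := cross U c xc zc xd zd hU2 hClif x z x' z'
            hker.1 hker.2 hker'.1 hker'.2
          by_cases heq : x = x' ∧ z = z'
          · rw [if_pos heq]
            rw [if_pos heq] at hc
            calc (pauli x z r rb * pauli x' z' q1 q2) * ((c x z * (starRingEnd ℂ) (c x' z')) *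
                  (∑ cc : Fin nC → ZMod 2, ∑ cb : Fin nC → ZMod 2,
                    pauli (xc x z) (zc x z) cc cb *
                      (starRingEnd ℂ) (pauli (xc x' z') (zc x' z') cc cb)) *
                  ((2:ℂ) ^ nD * (2:ℂ) ^ nD))
                = (pauli x z r rb * pauli x' z' q1 q2) *
                    ((c x z * (starRingEnd ℂ) (c x' z') *
                      (∑ cc : Fin nC → ZMod 2, ∑ cb : Fin nC → ZMod 2,
                        pauli (xc x z) (zc x z) cc cb *
                          (starRingEnd ℂ) (pauli (xc x' z') (zc x' z') cc cb)) *
                      ((2:ℂ) ^ nD)) * ((2:ℂ) ^ nD)) := by ring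
              _ = (pauli x z r rb * pauli x' z' q1 q2) *
                    ((2:ℂ) ^ nB * (2:ℂ) ^ nA * (2:ℂ) ^ nD) := by rw [hc]
              _ = (pauli x z r rb * pauli x' z' q1 q2) *
                    ((2:ℂ) ^ nA * (2:ℂ) ^ nB * (2:ℂ) ^ nD) := by ring
          · rw [if_neg heq]
            rw [if_neg heq] at hc
            calc (pauli x z r rb * pauli x' z' q1 q2) * ((c x z * (starRingEnd ℂ) (c x' z')) *
                  (∑ cc : Fin nC → ZMod 2, ∑ cb : Fin nC → ZMod 2,
                    pauli (xc x z) (zc x z) cc cb *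
                      (starRingEnd ℂ) (pauli (xc x' z') (zc x' z') cc cb)) *
                  ((2:ℂ) ^ nD * (2:ℂ) ^ nD))
                = (pauli x z r rb * pauli x' z' q1 q2) *
                    ((c x z * (starRingEnd ℂ) (c x' z') *
                      (∑ cc : Fin nC → ZMod 2, ∑ cb : Fin nC → ZMod 2,
                        pauli (xc x z) (zc x z) cc cb *
                          (starRingEnd ℂ) (pauli (xc x' z') (zc x' z') cc cb)) *
                      ((2:ℂ) ^ nD)) * ((2:ℂ) ^ nD)) := by ring
              _ = 0 := by rw [hc]; ring
        · rw [if_neg hker']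
          rw [if_neg (show ¬(x = x' ∧ z = z') from
            fun h => hker' (by rw [← h.1, ← h.2]; exact hker))]
          ring
      simp only [hstep]
      rw [Finset.sum_eq_single x
        (fun b' _ hb => Finset.sum_eq_zero fun z' _ =>
          if_neg (fun h => hb h.1.symm))
        (fun h => absurd (Finset.mem_univ _) h)]
      rw [Finset.sum_eq_single z
        (fun b' _ hb => if_neg (fun h => hb h.2.symm))
        (fun h => absurd (Finset.mem_univ _) h)]
      rw [if_pos ⟨rfl, rfl⟩]
    · conv_rhs => rw [if_neg hker]
      refine Finset.sum_eq_zero fun x' _ => Finset.sum_eq_zero fun z' _ => ?_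
      rw [if_neg hker]
      ring
  have e2 : ∀ cc cb : Fin nC → ZMod 2,
      phiEPR nA nB nC nD U r cc cb rb * (starRingEnd ℂ) (phiEPR nA nB nC nD U q1 cc cb q2)
      = (K * K) * ((∑ x : Fin nA → ZMod 2, ∑ z : Fin nA → ZMod 2,
          pauli x z r rb * (c x z * pauli (xc x z) (zc x z) cc cb *
            (if xd x z = 0 ∧ zd x z = 0 then ((2:ℂ) ^ nD) else 0))) *
        (∑ x : Fin nA → ZMod 2, ∑ z : Fin nA → ZMod 2,
          pauli x z q1 q2 * ((starRingEnd ℂ) (c x z) * pauli (xc x z) (zc x z) cc cb *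
            (if xd x z = 0 ∧ zd x z = 0 then ((2:ℂ) ^ nD) else 0)))) := by
    intro cc cb
    rw [phi_formula U c xc zc xd zd hClif r cc cb rb, hφc q1 q2 cc cb]
    rw [← hKdef]
    ring
  simp only [e2]
  simp only [← Finset.mul_sum]
  have e3 : ∀ cc cb : Fin nC → ZMod 2,
      ((∑ x : Fin nA → ZMod 2, ∑ z : Fin nA → ZMod 2,
          pauli x z r rb * (c x z * pauli (xc x z) (zc x z) cc cb *
            (if xd x z = 0 ∧ zd x z = 0 then ((2:ℂ) ^ nD) else 0))) *
        (∑ x : Fin nA → ZMod 2, ∑ z : Fin nA → ZMod 2,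
          pauli x z q1 q2 * ((starRingEnd ℂ) (c x z) * pauli (xc x z) (zc x z) cc cb *
            (if xd x z = 0 ∧ zd x z = 0 then ((2:ℂ) ^ nD) else 0))))
      = ∑ x : Fin nA → ZMod 2, ∑ z : Fin nA → ZMod 2, ∑ x' : Fin nA → ZMod 2,
          ∑ z' : Fin nA → ZMod 2,
          (pauli x z r rb * (c x z * pauli (xc x z) (zc x z) cc cb *
            (if xd x z = 0 ∧ zd x z = 0 then ((2:ℂ) ^ nD) else 0))) *
          (pauli x' z' q1 q2 * ((starRingEnd ℂ) (c x' z') * pauli (xc x' z') (zc x' z') cc cb *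
            (if xd x' z' = 0 ∧ zd x' z' = 0 then ((2:ℂ) ^ nD) else 0))) :=
    fun cc cb => hmulsum _ _
  simp only [e3]
  rw [sum_swap4]
  have e4 : ∀ x z : Fin nA → ZMod 2,
      (∑ cc : Fin nC → ZMod 2, ∑ cb : Fin nC → ZMod 2, ∑ x' : Fin nA → ZMod 2,
          ∑ z' : Fin nA → ZMod 2,
          (pauli x z r rb * (c x z * pauli (xc x z) (zc x z) cc cb *
            (if xd x z = 0 ∧ zd x z = 0 then ((2:ℂ) ^ nD) else 0))) *
          (pauli x' z' q1 q2 * ((starRingEnd ℂ) (c x' z') * pauli (xc x' z') (zc x' z') cc cb *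
            (if xd x' z' = 0 ∧ zd x' z' = 0 then ((2:ℂ) ^ nD) else 0))))
      = ∑ x' : Fin nA → ZMod 2, ∑ z' : Fin nA → ZMod 2, ∑ cc : Fin nC → ZMod 2,
          ∑ cb : Fin nC → ZMod 2,
          (pauli x z r rb * (c x z * pauli (xc x z) (zc x z) cc cb *
            (if xd x z = 0 ∧ zd x z = 0 then ((2:ℂ) ^ nD) else 0))) *
          (pauli x' z' q1 q2 * ((starRingEnd ℂ) (c x' z') * pauli (xc x' z') (zc x' z') cc cb *
            (if xd x' z' = 0 ∧ zd x' z' = 0 then ((2:ℂ) ^ nD) else 0))) :=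
    fun x z => sum_swap4 _
  simp only [e4]
  have e5 : ∀ x z x' z' : Fin nA → ZMod 2,
      (∑ cc : Fin nC → ZMod 2, ∑ cb : Fin nC → ZMod 2,
        (pauli x z r rb * (c x z * pauli (xc x z) (zc x z) cc cb *
          (if xd x z = 0 ∧ zd x z = 0 then ((2:ℂ) ^ nD) else 0))) *
        (pauli x' z' q1 q2 * ((starRingEnd ℂ) (c x' z') * pauli (xc x' z') (zc x' z') cc cb *
          (if xd x' z' = 0 ∧ zd x' z' = 0 then ((2:ℂ) ^ nD) else 0))))
      = (pauli x z r rb * pauli x' z' q1 q2) * ((c x z * (starRingEnd ℂ) (c x' z')) *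
          (∑ cc : Fin nC → ZMod 2, ∑ cb : Fin nC → ZMod 2,
            pauli (xc x z) (zc x z) cc cb *
              (starRingEnd ℂ) (pauli (xc x' z') (zc x' z') cc cb)) *
          ((if xd x z = 0 ∧ zd x z = 0 then ((2:ℂ) ^ nD) else 0) *
            (if xd x' z' = 0 ∧ zd x' z' = 0 then ((2:ℂ) ^ nD) else 0))) := by
    intro x z x' z'
    have hterm : ∀ cc cb : Fin nC → ZMod 2,
        (pauli x z r rb * (c x z * pauli (xc x z) (zc x z) cc cb *
          (if xd x z = 0 ∧ zd x z = 0 then ((2:ℂ) ^ nD) else 0))) *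
        (pauli x' z' q1 q2 * ((starRingEnd ℂ) (c x' z') * pauli (xc x' z') (zc x' z') cc cb *
          (if xd x' z' = 0 ∧ zd x' z' = 0 then ((2:ℂ) ^ nD) else 0)))
        = ((pauli x z r rb * pauli x' z' q1 q2) * ((c x z * (starRingEnd ℂ) (c x' z')) *
            ((if xd x z = 0 ∧ zd x z = 0 then ((2:ℂ) ^ nD) else 0) *
              (if xd x' z' = 0 ∧ zd x' z' = 0 then ((2:ℂ) ^ nD) else 0)))) *
          (pauli (xc x z) (zc x z) cc cb *
            (starRingEnd ℂ) (pauli (xc x' z') (zc x' z') cc cb)) := by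
      intro cc cb
      rw [conj_pauli]
      ring
    simp only [hterm, ← Finset.mul_sum]
    ring
  simp only [e5]
  simp only [inner_collapse]
  have e6 : ∀ x z : Fin nA → ZMod 2,
      (if xd x z = 0 ∧ zd x z = 0 then
        (pauli x z r rb * pauli x z q1 q2) * ((2:ℂ) ^ nA * (2:ℂ) ^ nB * (2:ℂ) ^ nD)
      else 0)
      = ((2:ℂ) ^ nA * (2:ℂ) ^ nB * (2:ℂ) ^ nD) *
          (if xd x z = 0 ∧ zd x z = 0 then pauli x z r rb * pauli x z q1 q2 else 0) := by
    intro x z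
    split <;> ring
  simp only [e6]
  simp only [← Finset.mul_sum]
  rw [← mul_assoc]
  congr 1
  rw [hKdef]
  have hXX : (((2:ℂ) ^ nA) ^ 2 * (Real.sqrt (2 ^ nB) : ℂ) * (Real.sqrt (2 ^ nD) : ℂ)) *
      (((2:ℂ) ^ nA) ^ 2 * (Real.sqrt (2 ^ nB) : ℂ) * (Real.sqrt (2 ^ nD) : ℂ))
      = ((2:ℂ) ^ nA) ^ 4 * (2:ℂ) ^ nB * (2:ℂ) ^ nD := by
    rw [← hsB2, ← hsD2]; ring
  rw [← mul_inv, hXX]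
  have h2B : ((2:ℂ) ^ nB) ≠ 0 := pow_ne_zero _ two_ne_zero
  have h2D : ((2:ℂ) ^ nD) ≠ 0 := pow_ne_zero _ two_ne_zero
  field_simp

lemma pauli_sq_sum (x z : Fin nA → ZMod 2) :
    ∑ r : Fin nA → ZMod 2, ∑ rb : Fin nA → ZMod 2,
      pauli x z r rb * pauli x z r rb = ((2:ℂ) ^ nA) := by
  have h1 : ∀ r rb : Fin nA → ZMod 2,
      pauli x z r rb * pauli x z r rb = if r = rb + x then 1 else 0 := by
    intro r rb
    rw [pauli_apply, ite_zero_mul_ite_zero']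
    by_cases h : r = rb + x
    · simp [h, chi_mul_self]
    · simp [h]
  simp only [h1]
  rw [Finset.sum_comm]
  have h2 : ∀ rb : Fin nA → ZMod 2,
      (∑ r : Fin nA → ZMod 2, if r = rb + x then (1:ℂ) else 0) = 1 := by
    intro rb
    rw [Finset.sum_ite_eq', if_pos (Finset.mem_univ _)]
  simp only [h2]
  simp [Finset.card_univ]

lemma kernel_count (N : ℕ)
    (hN : N = Fintype.card {PA : (Fin nA → ZMod 2) × (Fin nA → ZMod 2) //
        xd PA.1 PA.2 = 0 ∧ zd PA.1 PA.2 = 0}) :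
    ∑ x : Fin nA → ZMod 2, ∑ z : Fin nA → ZMod 2,
      (if xd x z = 0 ∧ zd x z = 0 then (1:ℂ) else 0) = (N : ℂ) := by
  rw [hN, Fintype.card_subtype]
  rw [Finset.card_filter]
  push_cast
  exact (Fintype.sum_prod_type (f := fun PA : (Fin nA → ZMod 2) × (Fin nA → ZMod 2) =>
    if xd PA.1 PA.2 = 0 ∧ zd PA.1 PA.2 = 0 then (1:ℂ) else 0)).symm

lemma sum_subtype_pairs
    (f : (Fin nA → ZMod 2) → (Fin nA → ZMod 2) → ℂ) :
    (∑ PR : {PA : (Fin nA → ZMod 2) × (Fin nA → ZMod 2) //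
        xd PA.1 PA.2 = 0 ∧ zd PA.1 PA.2 = 0}, f PR.1.1 PR.1.2)
    = ∑ x : Fin nA → ZMod 2, ∑ z : Fin nA → ZMod 2,
        (if xd x z = 0 ∧ zd x z = 0 then f x z else 0) := by
  rw [← Finset.sum_subtype
    (Finset.univ.filter (fun PA : (Fin nA → ZMod 2) × (Fin nA → ZMod 2) =>
      xd PA.1 PA.2 = 0 ∧ zd PA.1 PA.2 = 0)) (fun x => by simp)
    (fun PA => f PA.1 PA.2)]
  rw [Finset.sum_filter]
  exact Fintype.sum_prod_type (f := fun PA : (Fin nA → ZMod 2) × (Fin nA → ZMod 2) =>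
    if xd PA.1 PA.2 = 0 ∧ zd PA.1 PA.2 = 0 then f PA.1 PA.2 else 0)

lemma part2 (hU2 : Uᴴ * U = 1)
    (hClif : ∀ x z : Fin nA → ZMod 2,
      U * (pauli x z ⊗ₖ (1 : Matrix (Fin nB → ZMod 2) (Fin nB → ZMod 2) ℂ)) * Uᴴ
        = c x z • (pauli (xc x z) (zc x z) ⊗ₖ pauli (xd x z) (zd x z)))
    (N : ℕ)
    (ρ : Matrix ((Fin nA → ZMod 2) × (Fin nA → ZMod 2))
      ((Fin nA → ZMod 2) × (Fin nA → ZMod 2)) ℂ)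
    (hρ : ρ = fun p q => ((2 ^ nA : ℂ) ^ 2 / N) *
      ∑ cc : Fin nC → ZMod 2, ∑ cb : Fin nC → ZMod 2,
        phiEPR nA nB nC nD U p.1 cc cb p.2 *
          (starRingEnd ℂ) (phiEPR nA nB nC nD U q.1 cc cb q.2)) :
    ρ = ((N : ℂ))⁻¹ •
        ∑ PR : {PA : (Fin nA → ZMod 2) × (Fin nA → ZMod 2) //
            xd PA.1 PA.2 = 0 ∧ zd PA.1 PA.2 = 0},
          (fun p q => ((2 ^ nA : ℂ))⁻¹ * pauli (PR.1.1) (PR.1.2) p.1 p.2 *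
            (starRingEnd ℂ) (pauli (PR.1.1) (PR.1.2) q.1 q.2) :
            Matrix ((Fin nA → ZMod 2) × (Fin nA → ZMod 2))
              ((Fin nA → ZMod 2) × (Fin nA → ZMod 2)) ℂ) := by
  subst hρ
  funext p q
  show ((2 ^ nA : ℂ) ^ 2 / N) * ∑ cc : Fin nC → ZMod 2, ∑ cb : Fin nC → ZMod 2,
        phiEPR nA nB nC nD U p.1 cc cb p.2 *
          (starRingEnd ℂ) (phiEPR nA nB nC nD U q.1 cc cb q.2) = _
  rw [sum_cc_cb U c xc zc xd zd hU2 hClif p.1 p.2 q.1 q.2]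
  rw [Pi.smul_apply, Pi.smul_apply, Finset.sum_apply, Finset.sum_apply, smul_eq_mul]
  have hsub := sum_subtype_pairs (xd := xd) (zd := zd)
    (fun x z => ((2 ^ nA : ℂ))⁻¹ * pauli x z p.1 p.2 *
      (starRingEnd ℂ) (pauli x z q.1 q.2))
  rw [show (∑ PR : {PA : (Fin nA → ZMod 2) × (Fin nA → ZMod 2) //
        xd PA.1 PA.2 = 0 ∧ zd PA.1 PA.2 = 0},
      (fun (p q : (Fin nA → ZMod 2) × (Fin nA → ZMod 2)) =>
        ((2 ^ nA : ℂ))⁻¹ * pauli (PR.1.1) (PR.1.2) p.1 p.2 *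
          (starRingEnd ℂ) (pauli (PR.1.1) (PR.1.2) q.1 q.2) :
        Matrix ((Fin nA → ZMod 2) × (Fin nA → ZMod 2))
          ((Fin nA → ZMod 2) × (Fin nA → ZMod 2)) ℂ) p q)
      = ∑ x : Fin nA → ZMod 2, ∑ z : Fin nA → ZMod 2,
          (if xd x z = 0 ∧ zd x z = 0 then ((2 ^ nA : ℂ))⁻¹ * pauli x z p.1 p.2 *
            (starRingEnd ℂ) (pauli x z q.1 q.2) else 0) from hsub]
  simp only [conj_pauli]
  have hpull : ∀ x z : Fin nA → ZMod 2,
      (if xd x z = 0 ∧ zd x z = 0 then ((2 ^ nA : ℂ))⁻¹ * pauli x z p.1 p.2 *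
        pauli x z q.1 q.2 else 0)
      = ((2:ℂ) ^ nA)⁻¹ * (if xd x z = 0 ∧ zd x z = 0 then
          pauli x z p.1 p.2 * pauli x z q.1 q.2 else 0) := by
    intro x z; split <;> ring
  simp only [hpull, ← Finset.mul_sum]
  rw [← mul_assoc, ← mul_assoc]
  congr 1
  by_cases h : (N:ℂ) = 0
  · simp [h]
  · have h2A : ((2:ℂ) ^ nA) ≠ 0 := pow_ne_zero _ two_ne_zero
    field_simp

lemma part1 (hU2 : Uᴴ * U = 1)
    (hClif : ∀ x z : Fin nA → ZMod 2,
      U * (pauli x z ⊗ₖ (1 : Matrix (Fin nB → ZMod 2) (Fin nB → ZMod 2) ℂ)) * Uᴴ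
        = c x z • (pauli (xc x z) (zc x z) ⊗ₖ pauli (xd x z) (zd x z)))
    (N : ℕ)
    (hN : N = Fintype.card {PA : (Fin nA → ZMod 2) × (Fin nA → ZMod 2) //
        xd PA.1 PA.2 = 0 ∧ zd PA.1 PA.2 = 0}) :
    (∑ r : Fin nA → ZMod 2, ∑ cc : Fin nC → ZMod 2,
        ∑ cb : Fin nC → ZMod 2, ∑ rb : Fin nA → ZMod 2,
          Complex.normSq (phiEPR nA nB nC nD U r cc cb rb))
        = (N : ℝ) / (2 ^ nA) ^ 2 := by
  have h2A : ((2:ℂ) ^ nA) ≠ 0 := pow_ne_zero _ two_ne_zero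
  have hC : ((∑ r : Fin nA → ZMod 2, ∑ cc : Fin nC → ZMod 2,
      ∑ cb : Fin nC → ZMod 2, ∑ rb : Fin nA → ZMod 2,
        Complex.normSq (phiEPR nA nB nC nD U r cc cb rb) : ℝ) : ℂ)
      = (N : ℂ) / ((2:ℂ) ^ nA) ^ 2 := by
    push_cast
    have hterm : ∀ (r rb : Fin nA → ZMod 2) (cc cb : Fin nC → ZMod 2),
        ((Complex.normSq (phiEPR nA nB nC nD U r cc cb rb) : ℝ) : ℂ)
        = phiEPR nA nB nC nD U r cc cb rb *
            (starRingEnd ℂ) (phiEPR nA nB nC nD U r cc cb rb) :=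
      fun r rb cc cb => (Complex.mul_conj _).symm
    simp only [hterm]
    have hreord : ∀ r : Fin nA → ZMod 2,
        (∑ cc : Fin nC → ZMod 2, ∑ cb : Fin nC → ZMod 2, ∑ rb : Fin nA → ZMod 2,
          phiEPR nA nB nC nD U r cc cb rb *
            (starRingEnd ℂ) (phiEPR nA nB nC nD U r cc cb rb))
        = ∑ rb : Fin nA → ZMod 2, ∑ cc : Fin nC → ZMod 2, ∑ cb : Fin nC → ZMod 2,
            phiEPR nA nB nC nD U r cc cb rb *
              (starRingEnd ℂ) (phiEPR nA nB nC nD U r cc cb rb) :=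
      fun r => rot3 _
    simp only [hreord]
    have hss : ∀ r rb : Fin nA → ZMod 2,
        (∑ cc : Fin nC → ZMod 2, ∑ cb : Fin nC → ZMod 2,
          phiEPR nA nB nC nD U r cc cb rb *
            (starRingEnd ℂ) (phiEPR nA nB nC nD U r cc cb rb))
        = (((2:ℂ) ^ nA) ^ 3)⁻¹ * ∑ x : Fin nA → ZMod 2, ∑ z : Fin nA → ZMod 2,
            (if xd x z = 0 ∧ zd x z = 0 then pauli x z r rb * pauli x z r rb else 0) :=
      fun r rb => sum_cc_cb U c xc zc xd zd hU2 hClif r rb r rb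
    simp only [hss, ← Finset.mul_sum]
    rw [sum_swap4]
    have hxz : ∀ x z : Fin nA → ZMod 2,
        (∑ r : Fin nA → ZMod 2, ∑ rb : Fin nA → ZMod 2,
          (if xd x z = 0 ∧ zd x z = 0 then pauli x z r rb * pauli x z r rb else 0))
        = if xd x z = 0 ∧ zd x z = 0 then ((2:ℂ) ^ nA) else 0 := by
      intro x z
      by_cases h : xd x z = 0 ∧ zd x z = 0
      · simp only [if_pos h]
        exact pauli_sq_sum x z
      · simp [h]
    simp only [hxz]
    have hpull : ∀ x z : Fin nA → ZMod 2,
        (if xd x z = 0 ∧ zd x z = 0 then ((2:ℂ) ^ nA) else 0)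
        = ((2:ℂ) ^ nA) * (if xd x z = 0 ∧ zd x z = 0 then (1:ℂ) else 0) := by
      intro x z; split <;> ring
    simp only [hpull, ← Finset.mul_sum]
    rw [kernel_count xd zd N hN]
    field_simp
  have := hC
  rw [show ((N : ℂ) / ((2:ℂ) ^ nA) ^ 2) = (((N : ℝ) / ((2:ℝ) ^ nA) ^ 2 : ℝ) : ℂ) from by
    push_cast; ring] at this
  exact_mod_cast this

lemma ker_zero (hU1 : U * Uᴴ = 1)
    (hClif : ∀ x z : Fin nA → ZMod 2,
      U * (pauli x z ⊗ₖ (1 : Matrix (Fin nB → ZMod 2) (Fin nB → ZMod 2) ℂ)) * Uᴴ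
        = c x z • (pauli (xc x z) (zc x z) ⊗ₖ pauli (xd x z) (zd x z))) :
    xd 0 0 = 0 ∧ zd 0 0 = 0 := by
  have heq : (1 : Matrix ((Fin nC → ZMod 2) × (Fin nD → ZMod 2))
      ((Fin nC → ZMod 2) × (Fin nD → ZMod 2)) ℂ)
      = c 0 0 • (pauli (xc 0 0) (zc 0 0) ⊗ₖ pauli (xd 0 0) (zd 0 0)) := by
    have h := hClif 0 0
    rw [pauli_zero_zero, Matrix.one_kronecker_one, Matrix.mul_one, hU1] at h
    exact h
  have hent : ∀ d : Fin nD → ZMod 2, (1:ℂ)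
      = c 0 0 * (pauli (xc 0 0) (zc 0 0) 0 0 * pauli (xd 0 0) (zd 0 0) d d) := by
    intro d
    have h2 := congrFun (congrFun heq ((0 : Fin nC → ZMod 2), d)) ((0 : Fin nC → ZMod 2), d)
    simpa [Matrix.one_apply_eq, Matrix.smul_apply, smul_eq_mul,
      Matrix.kroneckerMap_apply] using h2
  have hxd : xd 0 0 = 0 := by
    by_contra hx
    have h0 := hent 0
    have hz : pauli (xd 0 0) (zd 0 0) 0 0 = 0 := by
      rw [pauli_apply, if_neg]
      intro h
      apply hx
      have h' := (zmod_eq_add_iff 0 0 (xd 0 0)).mp h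
      simpa using h'
    rw [hz] at h0
    simp at h0
  have hPD : ∀ d : Fin nD → ZMod 2,
      pauli (xd 0 0) (zd 0 0) d d = chi (zd 0 0) d := by
    intro d; rw [pauli_apply, hxd, add_zero, if_pos rfl]
  have hzd : zd 0 0 = 0 := by
    by_contra hz
    have hsum : ((2:ℂ) ^ nD)
        = c 0 0 * (pauli (xc 0 0) (zc 0 0) 0 0 * ∑ d : Fin nD → ZMod 2, chi (zd 0 0) d) := by
      calc ((2:ℂ) ^ nD) = ∑ _d : Fin nD → ZMod 2, (1:ℂ) := by
            simp [Finset.card_univ]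
        _ = ∑ d : Fin nD → ZMod 2,
              c 0 0 * (pauli (xc 0 0) (zc 0 0) 0 0 * chi (zd 0 0) d) :=
            Finset.sum_congr rfl fun d _ => by rw [← hPD d]; exact hent d
        _ = c 0 0 * (pauli (xc 0 0) (zc 0 0) 0 0 * ∑ d : Fin nD → ZMod 2, chi (zd 0 0) d) := by
            rw [← Finset.mul_sum, ← Finset.mul_sum]
    rw [sum_chi, if_neg hz] at hsum
    simp at hsum
  exact ⟨hxd, hzd⟩

lemma part3 (hU1 : U * Uᴴ = 1) (hU2 : Uᴴ * U = 1)
    (hClif : ∀ x z : Fin nA → ZMod 2,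
      U * (pauli x z ⊗ₖ (1 : Matrix (Fin nB → ZMod 2) (Fin nB → ZMod 2) ℂ)) * Uᴴ
        = c x z • (pauli (xc x z) (zc x z) ⊗ₖ pauli (xd x z) (zd x z)))
    (N : ℕ)
    (hN : N = Fintype.card {PA : (Fin nA → ZMod 2) × (Fin nA → ZMod 2) //
        xd PA.1 PA.2 = 0 ∧ zd PA.1 PA.2 = 0})
    (ρ : Matrix ((Fin nA → ZMod 2) × (Fin nA → ZMod 2))
      ((Fin nA → ZMod 2) × (Fin nA → ZMod 2)) ℂ)
    (hρ : ρ = fun p q => ((2 ^ nA : ℂ) ^ 2 / N) *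
      ∑ cc : Fin nC → ZMod 2, ∑ cb : Fin nC → ZMod 2,
        phiEPR nA nB nC nD U p.1 cc cb p.2 *
          (starRingEnd ℂ) (phiEPR nA nB nC nD U q.1 cc cb q.2))
    (h1 : N = 1) :
    ρ = fun p q => ((2 ^ nA : ℂ))⁻¹ *
        (if p.1 = p.2 then 1 else 0) * (if q.1 = q.2 then 1 else 0) := by
  have hrho := part2 U c xc zc xd zd hU2 hClif N ρ hρ
  have hcard : Fintype.card {PA : (Fin nA → ZMod 2) × (Fin nA → ZMod 2) //
      xd PA.1 PA.2 = 0 ∧ zd PA.1 PA.2 = 0} = 1 := by rw [← hN, h1]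
  obtain ⟨a, ha⟩ := Fintype.card_eq_one_iff.mp hcard
  set el : {PA : (Fin nA → ZMod 2) × (Fin nA → ZMod 2) //
      xd PA.1 PA.2 = 0 ∧ zd PA.1 PA.2 = 0} :=
    ⟨(0, 0), ker_zero U c xc zc xd zd hU1 hClif⟩ with hel
  have hsum : (∑ PR : {PA : (Fin nA → ZMod 2) × (Fin nA → ZMod 2) //
        xd PA.1 PA.2 = 0 ∧ zd PA.1 PA.2 = 0},
      (fun p q => ((2 ^ nA : ℂ))⁻¹ * pauli (PR.1.1) (PR.1.2) p.1 p.2 *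
        (starRingEnd ℂ) (pauli (PR.1.1) (PR.1.2) q.1 q.2) :
        Matrix ((Fin nA → ZMod 2) × (Fin nA → ZMod 2))
          ((Fin nA → ZMod 2) × (Fin nA → ZMod 2)) ℂ))
      = (fun p q => ((2 ^ nA : ℂ))⁻¹ * pauli (el.1.1) (el.1.2) p.1 p.2 *
        (starRingEnd ℂ) (pauli (el.1.1) (el.1.2) q.1 q.2)) := by
    calc _ = ∑ _PR : {PA : (Fin nA → ZMod 2) × (Fin nA → ZMod 2) //
          xd PA.1 PA.2 = 0 ∧ zd PA.1 PA.2 = 0},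
        (fun p q => ((2 ^ nA : ℂ))⁻¹ * pauli (el.1.1) (el.1.2) p.1 p.2 *
          (starRingEnd ℂ) (pauli (el.1.1) (el.1.2) q.1 q.2) :
          Matrix ((Fin nA → ZMod 2) × (Fin nA → ZMod 2))
            ((Fin nA → ZMod 2) × (Fin nA → ZMod 2)) ℂ) :=
        Finset.sum_congr rfl fun PR _ => by
          rw [show PR = el from (ha PR).trans (ha el).symm]
      _ = _ := by
        rw [Finset.sum_const, Finset.card_univ, hcard, one_smul]
  rw [hrho, hsum, h1]
  funext p q
  have e1 : (el.val).1 = (0 : Fin nA → ZMod 2) := rfl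
  have e2 : (el.val).2 = (0 : Fin nA → ZMod 2) := rfl
  simp only [Nat.cast_one, inv_one, one_smul, e1, e2, pauli_zero_zero, Matrix.one_apply]
  split <;> split <;> simp
end main

/-- When the generalized Bell measurement yields `|EPR⟩_{DD̄}` (probability
`N_{I_D}/d_A²`), the normalized post-measurement state on `RR̄` is
`ρ_{RR̄} = (1/N_{I_D}) ∑_{P_R : Λ_D(P_R) = I_D} |P_R⟩⟨P_R|`; in particular
for `N_{I_D} = 1` the output is exactly `|EPR⟩⟨EPR|_{RR̄}`. -/
theorem stmt11 (nA nB nC nD : ℕ)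
    (U : Matrix ((Fin nC → ZMod 2) × (Fin nD → ZMod 2))
      ((Fin nA → ZMod 2) × (Fin nB → ZMod 2)) ℂ)
    (hU1 : U * Uᴴ = 1) (hU2 : Uᴴ * U = 1)
    (c : (Fin nA → ZMod 2) → (Fin nA → ZMod 2) → ℂ)
    (xc zc : (Fin nA → ZMod 2) → (Fin nA → ZMod 2) → (Fin nC → ZMod 2))
    (xd zd : (Fin nA → ZMod 2) → (Fin nA → ZMod 2) → (Fin nD → ZMod 2))
    (hClif : ∀ x z : Fin nA → ZMod 2, ‖c x z‖ = 1 ∧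
      U * (pauli x z ⊗ₖ (1 : Matrix (Fin nB → ZMod 2) (Fin nB → ZMod 2) ℂ)) * Uᴴ
        = c x z • (pauli (xc x z) (zc x z) ⊗ₖ pauli (xd x z) (zd x z)))
    (N : ℕ)
    (hN : N = Fintype.card {PA : (Fin nA → ZMod 2) × (Fin nA → ZMod 2) //
        xd PA.1 PA.2 = 0 ∧ zd PA.1 PA.2 = 0})
    (ρ : Matrix ((Fin nA → ZMod 2) × (Fin nA → ZMod 2))
      ((Fin nA → ZMod 2) × (Fin nA → ZMod 2)) ℂ)
    (hρ : ρ = fun p q => ((2 ^ nA : ℂ) ^ 2 / N) *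
      ∑ cc : Fin nC → ZMod 2, ∑ cb : Fin nC → ZMod 2,
        phiEPR nA nB nC nD U p.1 cc cb p.2 *
          (starRingEnd ℂ) (phiEPR nA nB nC nD U q.1 cc cb q.2)) :
    -- probability of the |EPR⟩_{DD̄} outcome
    (∑ r : Fin nA → ZMod 2, ∑ cc : Fin nC → ZMod 2,
        ∑ cb : Fin nC → ZMod 2, ∑ rb : Fin nA → ZMod 2,
          Complex.normSq (phiEPR nA nB nC nD U r cc cb rb))
        = (N : ℝ) / (2 ^ nA) ^ 2
    -- the normalized post-measurement state on R R̄
    ∧ ρ = ((N : ℂ))⁻¹ •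
        ∑ PR : {PA : (Fin nA → ZMod 2) × (Fin nA → ZMod 2) //
            xd PA.1 PA.2 = 0 ∧ zd PA.1 PA.2 = 0},
          (fun p q => ((2 ^ nA : ℂ))⁻¹ * pauli (PR.1.1) (PR.1.2) p.1 p.2 *
            (starRingEnd ℂ) (pauli (PR.1.1) (PR.1.2) q.1 q.2) :
            Matrix ((Fin nA → ZMod 2) × (Fin nA → ZMod 2))
              ((Fin nA → ZMod 2) × (Fin nA → ZMod 2)) ℂ)
    -- perfect case
    ∧ (N = 1 → ρ = fun p q => ((2 ^ nA : ℂ))⁻¹ *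
        (if p.1 = p.2 then 1 else 0) * (if q.1 = q.2 then 1 else 0)) := by
  have hC2 : ∀ x z : Fin nA → ZMod 2,
      U * (pauli x z ⊗ₖ (1 : Matrix (Fin nB → ZMod 2) (Fin nB → ZMod 2) ℂ)) * Uᴴ
        = c x z • (pauli (xc x z) (zc x z) ⊗ₖ pauli (xd x z) (zd x z)) :=
    fun x z => (hClif x z).2
  exact ⟨part1 U c xc zc xd zd hU2 hC2 N hN,
    part2 U c xc zc xd zd hU2 hC2 N ρ hρ,
    fun h1 => part3 U c xc zc xd zd hU1 hU2 hC2 N hN ρ hρ h1⟩
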